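/- Let χ be a non-principal Dirichlet character modulo a prime p ≥ 5, and let q_1 < q_2 be the two smallest prime non-residues of χ. Assume q_1 ≠ 2 or q_2 ≠ 3. Let S be the maximal number of consecutive integers on which χ takes the same value, i.e., the largest integer S such that there exists an integer x with χ(x) = χ(x+1) = ⋯ = χ(x+S−1). Then q_2 ≤ S·q_1 + 1. -/

import Mathlib

/-- If all primes below `B` other than `q` map to `1` under `χ`, then every
positive `n < B` not divisible by `q` maps to `1` (by factorization into primes). -/
lemma hudson_aux_resOne {p : ℕ} [Fact p.Prime] (χ : DirichletCharacter ℂ p) (q B : ℕ)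
    (hB : ∀ ℓ : ℕ, ℓ.Prime → ℓ < B → ℓ ≠ q → χ (ℓ : ZMod p) = 1) :
    ∀ n : ℕ, 0 < n → n < B → ¬ q ∣ n → χ (n : ZMod p) = 1 := by
  intro n
  induction n using Nat.strong_induction_on with
  | _ n ih =>
    intro hn hnB hndvd
    rcases eq_or_lt_of_le (show 1 ≤ n from hn) with h1 | h1
    · rw [← h1]; simp
    have hne1 : n ≠ 1 := by omega
    set ℓ := n.minFac with hℓ
    have hℓp : ℓ.Prime := Nat.minFac_prime hne1
    obtain ⟨m, hm⟩ : ℓ ∣ n := n.minFac_dvd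
    have hm0 : 0 < m := by
      rcases Nat.eq_zero_or_pos m with h | h
      · subst h; simp at hm; omega
      · exact h
    have hℓ2 : 2 ≤ ℓ := hℓp.two_le
    have hℓlen : ℓ ≤ n := Nat.minFac_le hn
    have hmlt : m < n := by
      rcases Nat.lt_or_ge m n with h | h
      · exact h
      · exfalso; nlinarith [hm, hℓ2, hm0]
    have hℓne : ℓ ≠ q := by
      intro h; exact hndvd (h ▸ ⟨m, hm⟩)
    have hqm : ¬ q ∣ m := fun h => hndvd (hm ▸ h.mul_left ℓ)
    have hχℓ : χ (ℓ : ZMod p) = 1 := hB ℓ hℓp (by omega) hℓne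
    have hχm : χ (m : ZMod p) = 1 := ih m hmlt hm0 (by omega) hqm
    rw [hm]
    push_cast
    rw [map_mul, hχℓ, hχm, one_mul]

/-- A prime below `p` that is a unit maps to a nonzero value. -/
lemma hudson_aux_ne_zero {p : ℕ} [Fact p.Prime] (χ : DirichletCharacter ℂ p) (ℓ : ℕ)
    (hℓ : ℓ.Prime) (hlt : ℓ < p) : χ (ℓ : ZMod p) ≠ 0 := by
  have hpp : p.Prime := Fact.out
  have hunit : IsUnit ((ℓ : ℕ) : ZMod p) := by
    rw [ZMod.isUnit_iff_coprime]
    exact ((Nat.coprime_primes hℓ hpp).mpr (by omega))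
  have h := MulChar.coe_toUnitHom χ hunit.unit
  rw [hunit.unit_spec] at h
  rw [← h]
  exact Units.ne_zero _

/-- There is a prime non-residue different from `q₁` below `p`. -/
lemma hudson_aux_second {p : ℕ} [Fact p.Prime] (hp : 5 ≤ p)
    (χ : DirichletCharacter ℂ p) (hχ : χ ≠ 1)
    (q₁ : ℕ) (hq₁ : q₁.Prime) (hnr₁ : χ (q₁ : ZMod p) ∉ ({0, 1} : Set ℂ)) :
    ∃ ℓ : ℕ, ℓ.Prime ∧ ℓ < p ∧ ℓ ≠ q₁ ∧ χ (ℓ : ZMod p) ∉ ({0, 1} : Set ℂ) := by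
  have hpp : p.Prime := Fact.out
  by_contra hcon
  push_neg at hcon
  -- every prime below p other than q₁ is a residue (value 1)
  have Hsc : ∀ ℓ : ℕ, ℓ.Prime → ℓ < p → ℓ ≠ q₁ → χ (ℓ : ZMod p) = 1 := by
    intro ℓ hℓ hlt hne
    rcases hcon ℓ hℓ hlt hne with h0 | h1
    · exact absurd h0 (hudson_aux_ne_zero χ ℓ hℓ hlt)
    · exact h1
  have L := hudson_aux_resOne χ q₁ p Hsc
  have hq1ne1 : χ ((q₁ : ℕ) : ZMod p) ≠ 1 := fun h => hnr₁ (by right; exact h)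
  rcases eq_or_ne q₁ 2 with h2 | h2
  · -- parity trick : q₁ = 2
    subst h2
    have hodd : p % 2 = 1 := Nat.odd_iff.mp (hpp.odd_of_ne_two (by omega))
    obtain ⟨m, c, hmodd, hmpos, hmlt, h2m, hcs⟩ :
        ∃ m c : ℕ, m % 2 = 1 ∧ 0 < m ∧ m < p ∧ 2 * m = p + c ∧ (c = 1 ∨ c = 3) := by
      rcases (show p % 4 = 1 ∨ p % 4 = 3 by omega) with h | h
      · exact ⟨(p + 1) / 2, 1, by omega, by omega, by omega, by omega, Or.inl rfl⟩
      · exact ⟨(p + 3) / 2, 3, by omega, by omega, by omega, by omega, Or.inr rfl⟩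
    have hχm : χ ((m : ℕ) : ZMod p) = 1 := L m hmpos hmlt (by omega)
    have hχc : χ ((c : ℕ) : ZMod p) = 1 := by
      rcases hcs with h | h
      · subst h; simp
      · subst h
        exact Hsc 3 (by norm_num) (by omega) (by omega)
    have hcast : ((2 * m : ℕ) : ZMod p) = ((c : ℕ) : ZMod p) := by
      rw [h2m]; push_cast [ZMod.natCast_self]; ring
    have : χ (((2 : ℕ) : ZMod p)) * χ ((m : ℕ) : ZMod p) = 1 := by
      rw [← map_mul, ← Nat.cast_mul, hcast, hχc]
    rw [hχm, mul_one] at this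
    exact hq1ne1 this
  · -- counting : q₁ ≥ 3
    have h3 : 3 ≤ q₁ := by have := hq₁.two_le; omega
    classical
    set T : Finset ℕ := (Finset.Ioc 0 (p - 1)).filter (fun k => ¬ q₁ ∣ k) with hT
    set Hs : Finset (ZMod p)ˣ :=
      Finset.univ.filter (fun x : (ZMod p)ˣ => χ (x : ZMod p) = 1) with hHs
    set Hs' : Finset (ZMod p)ˣ :=
      Finset.univ.filter (fun x : (ZMod p)ˣ => ¬ χ (x : ZMod p) = 1) with hHs'
    -- a unit with χ g ≠ 1
    obtain ⟨g, hg⟩ : ∃ g : (ZMod p)ˣ, χ (g : ZMod p) ≠ 1 := by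
      by_contra hgc
      push_neg at hgc
      exact hχ (MulChar.ext fun a => by rw [hgc a, MulChar.one_apply_coe])
    -- Hs injects into Hs' via multiplication by g
    have h1 : Hs.card ≤ Hs'.card := by
      apply Finset.card_le_card_of_injOn (fun x => g * x)
      · intro x hx
        simp only [Finset.mem_coe, hHs, Finset.mem_filter, Finset.mem_univ, true_and] at hx
        simp only [Finset.mem_coe, hHs', Finset.mem_filter, Finset.mem_univ, true_and]
        rw [Units.val_mul, map_mul, hx, mul_one]
        exact hg
      · intro x _ y _ h
        exact mul_left_cancel h
    have h2 : Hs.card + Hs'.card = p - 1 := by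
      rw [hHs, hHs', Finset.card_filter_add_card_filter_not]
      rw [Finset.card_univ, ZMod.card_units p]
    -- T injects into Hs
    have h4 : T.card ≤ Hs.card := by
      apply Finset.card_le_card_of_injOn
        (fun k => if h : IsUnit ((k : ℕ) : ZMod p) then h.unit else 1)
      · intro k hk
        have hkd := (Finset.mem_filter.mp hk).2
        obtain ⟨hk0, hkp⟩ := Finset.mem_Ioc.mp (Finset.mem_filter.mp hk).1
        have hklt : k < p := by omega
        have hunit : IsUnit ((k : ℕ) : ZMod p) := by
          rw [ZMod.isUnit_iff_coprime]
          exact Nat.Coprime.symm ((Nat.Prime.coprime_iff_not_dvd hpp).mpr (by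
            intro hd; exact absurd (Nat.le_of_dvd hk0 hd) (by omega)))
        simp only [Finset.mem_coe, hHs, Finset.mem_filter, Finset.mem_univ, true_and, dif_pos hunit]
        rw [hunit.unit_spec]
        exact L k hk0 hklt hkd
      · intro x hx y hy h
        obtain ⟨hx0, hxp⟩ := Finset.mem_Ioc.mp (Finset.mem_filter.mp hx).1
        obtain ⟨hy0, hyp⟩ := Finset.mem_Ioc.mp (Finset.mem_filter.mp hy).1
        dsimp only at h
        have hxu : IsUnit ((x : ℕ) : ZMod p) := by
          rw [ZMod.isUnit_iff_coprime]
          exact Nat.Coprime.symm ((Nat.Prime.coprime_iff_not_dvd hpp).mpr (by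
            intro hd; exact absurd (Nat.le_of_dvd (by omega) hd) (by omega)))
        have hyu : IsUnit ((y : ℕ) : ZMod p) := by
          rw [ZMod.isUnit_iff_coprime]
          exact Nat.Coprime.symm ((Nat.Prime.coprime_iff_not_dvd hpp).mpr (by
            intro hd; exact absurd (Nat.le_of_dvd (by omega) hd) (by omega)))
        rw [dif_pos hxu, dif_pos hyu] at h
        have hxy : ((x : ℕ) : ZMod p) = ((y : ℕ) : ZMod p) := by
          rw [← hxu.unit_spec, ← hyu.unit_spec, h]
        have := congrArg ZMod.val hxy
        rwa [ZMod.val_cast_of_lt (by omega), ZMod.val_cast_of_lt (by omega)] at this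
    -- T.card = (p-1) - (p-1)/q₁
    have h5 : T.card + (p - 1) / q₁ = p - 1 := by
      have := Finset.card_filter_add_card_filter_not
        (s := Finset.Ioc 0 (p - 1)) (p := fun k => q₁ ∣ k)
      rw [Nat.Ioc_filter_dvd_card_eq_div, Nat.card_Ioc] at this
      have hTc : T.card = ((Finset.Ioc 0 (p-1)).filter (fun k => ¬ q₁ ∣ k)).card := rfl
      omega
    have h6 : (p - 1) / q₁ ≤ (p - 1) / 3 := Nat.div_le_div_left h3 (by norm_num)
    omega

theorem hudson_lemma (p : ℕ) [Fact p.Prime] (hp : 5 ≤ p)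
    (χ : DirichletCharacter ℂ p) (hχ : χ ≠ 1)
    (q₁ q₂ : ℕ) (hq₁ : q₁.Prime) (hq₂ : q₂.Prime) (hlt : q₁ < q₂)
    (hnr₁ : χ (q₁ : ZMod p) ∉ ({0, 1} : Set ℂ))
    (hnr₂ : χ (q₂ : ZMod p) ∉ ({0, 1} : Set ℂ))
    (hmin₁ : ∀ q : ℕ, q.Prime → χ (q : ZMod p) ∉ ({0, 1} : Set ℂ) → q₁ ≤ q)
    (hmin₂ : ∀ q : ℕ, q.Prime → χ (q : ZMod p) ∉ ({0, 1} : Set ℂ) → q ≠ q₁ → q₂ ≤ q)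
    (hne : q₁ ≠ 2 ∨ q₂ ≠ 3)
    (S : ℕ)
    (hrun : ∃ x : ℤ, ∀ i : ℕ, i < S → χ ((x + i : ℤ) : ZMod p) = χ ((x : ℤ) : ZMod p))
    (hmaxrun : ¬ ∃ x : ℤ, ∀ i : ℕ, i < S + 1 → χ ((x + i : ℤ) : ZMod p) = χ ((x : ℤ) : ZMod p)) :
    q₂ ≤ S * q₁ + 1 := by
  obtain ⟨ℓ₀, hℓ₀p, hℓ₀lt, hℓ₀ne, hℓ₀nr⟩ := hudson_aux_second hp χ hχ q₁ hq₁ hnr₁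
  have hq2p : q₂ < p := lt_of_le_of_lt (hmin₂ ℓ₀ hℓ₀p hℓ₀nr hℓ₀ne) hℓ₀lt
  have hq₁2 := hq₁.two_le
  have hq₂2 := hq₂.two_le
  have hχq₁0 : χ ((q₁ : ℕ) : ZMod p) ≠ 0 := fun h => hnr₁ (Or.inl h)
  -- all primes below q₂ other than q₁ are residues
  have hprim : ∀ ℓ : ℕ, ℓ.Prime → ℓ < q₂ → ℓ ≠ q₁ → χ (ℓ : ZMod p) = 1 := by
    intro ℓ hℓ hltq hne'
    by_cases hmem : χ ((ℓ : ℕ) : ZMod p) ∈ ({0, 1} : Set ℂ)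
    · rcases hmem with h0 | h1
      · exact absurd h0 (hudson_aux_ne_zero χ ℓ hℓ (by omega))
      · exact h1
    · exact absurd (hmin₂ ℓ hℓ hmem hne') (by omega)
  have L := hudson_aux_resOne χ q₁ q₂ hprim
  have hdm := Nat.div_add_mod (q₂ - 2) q₁
  have hmod := Nat.mod_lt (q₂ - 2) (show 0 < q₁ by omega)
  set a := (q₂ - 2) / q₁ with ha
  by_cases hSK : a + 1 ≤ S
  · -- q₂ ≤ (a+1)·q₁ + 1 ≤ S·q₁ + 1
    have he : (a + 1) * q₁ = q₁ * a + q₁ := by ring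
    have h1 : q₂ ≤ (a + 1) * q₁ + 1 := by omega
    have h2 : (a + 1) * q₁ ≤ S * q₁ := Nat.mul_le_mul_right q₁ hSK
    omega
  · exfalso
    have hS : S ≤ a := by omega
    have hq1ne0 : ((q₁ : ℕ) : ZMod p) ≠ 0 := by
      intro h
      exact hχq₁0 (by rw [h]; exact χ.map_nonunit not_isUnit_zero)
    set u : ZMod p := ((q₁ : ℕ) : ZMod p)⁻¹ with hu
    have hqu : ((q₁ : ℕ) : ZMod p) * u = 1 := mul_inv_cancel₀ hq1ne0
    apply hmaxrun
    refine ⟨(u.val : ℤ), ?_⟩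
    have key : ∀ j : ℕ, j ≤ S →
        χ ((q₁ : ℕ) : ZMod p) * χ ((((u.val : ℤ) + (j : ℕ) : ℤ)) : ZMod p) = 1 := by
      intro j hj
      have hcast : ((((u.val : ℤ) + (j : ℕ) : ℤ)) : ZMod p) = u + (j : ZMod p) := by
        push_cast [ZMod.natCast_zmod_val]
        ring
      have hmul : ((q₁ : ℕ) : ZMod p) * (u + (j : ZMod p)) = ((1 + j * q₁ : ℕ) : ZMod p) := by
        push_cast
        rw [mul_add, hqu]
        ring
      have hja : j * q₁ ≤ a * q₁ := Nat.mul_le_mul_right q₁ (le_trans hj hS)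
      have haq : a * q₁ = q₁ * a := mul_comm a q₁
      have hlt' : 1 + j * q₁ < q₂ := by omega
      have hdvd : ¬ q₁ ∣ (1 + j * q₁) := by
        intro hd
        have hd2 : q₁ ∣ j * q₁ := dvd_mul_left q₁ j
        have hd1 : q₁ ∣ 1 := by
          have := Nat.dvd_sub hd hd2
          rwa [show 1 + j * q₁ - j * q₁ = 1 by omega] at this
        have := Nat.le_of_dvd (by norm_num) hd1
        omega
      have h1 : χ ((1 + j * q₁ : ℕ) : ZMod p) = 1 := L _ (by omega) hlt' hdvd
      rw [hcast, ← map_mul, hmul, h1]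
    intro i hi
    have ki := key i (by omega)
    have k0 := key 0 (by omega)
    simp only [Nat.cast_zero, add_zero] at k0
    exact mul_left_cancel₀ hχq₁0 (ki.trans k0.symm)
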